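/- arXiv:2505.07503 — 4 statements merged into one kernel-verified Lean document; each statement's English description precedes it below -/
import Mathlib

section
/- Let Θ be a measurable space, let P be a probability measure on Θ (the prior over parameters), and let L : Θ → ℝ be a measurable function with L(θ) > 0 for P-almost every θ (the likelihood θ ↦ p(y⁽¹:N⁾ | x⁽¹:N⁾, θ)), such that the evidence Z := ∫ L dP satisfies 0 < Z < ∞. Define the posterior measure Π := P.withDensity (fun θ => ENNReal.ofReal (L θ / Z)). Let Q be a probability measure on Θ (the variational distribution) with Q ≪ P, KL(Q‖P) < ∞, and θ ↦ log (L θ) integrable with respect to Q. Then the gap between the variational codelength and the Bayesian codelength equals the KL divergence from Q to the posterior: (∫ (− log (L θ)) dQ(θ) + (KL(Q‖P)).toReal) − (− log Z) = (KL(Q‖Π)).toReal, and moreover KL(Q‖Π) < ∞. -/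
open MeasureTheory
open scoped ENNReal NNReal

open scoped Classical in
/-- Kullback–Leibler divergence between two measures (Mathlib's `klDiv`). -/
noncomputable def klDiv {α : Type*} [MeasurableSpace α] (μ ν : Measure α) : ℝ≥0∞ :=
  if μ ≪ ν ∧ Integrable (llr μ ν) μ then ENNReal.ofReal (∫ x, llr μ ν x ∂μ) else ∞

/-- Gibbs' inequality: the integral of the log-likelihood ratio is nonnegative. -/
lemma integral_llr_nonneg' {α : Type*} [MeasurableSpace α] {μ ν : Measure α}
    [IsProbabilityMeasure μ] [IsProbabilityMeasure ν] (hμν : μ ≪ ν)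
    (h : Integrable (llr μ ν) μ) : 0 ≤ ∫ x, llr μ ν x ∂μ := by
  have h_exp : (fun x => Real.exp (- llr μ ν x)) =ᵐ[μ] fun x => (ν.rnDeriv μ x).toReal :=
    exp_neg_llr hμν
  have h_int : Integrable (fun x => (ν.rnDeriv μ x).toReal) μ :=
    Measure.integrable_toReal_rnDeriv
  have h_le : ∫ x, - llr μ ν x ∂μ ≤ ∫ x, ((ν.rnDeriv μ x).toReal - 1) ∂μ := by
    refine integral_mono_ae h.neg (h_int.sub (integrable_const 1)) ?_
    filter_upwards [h_exp] with x hx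
    have hpos : 0 < (ν.rnDeriv μ x).toReal := hx ▸ Real.exp_pos _
    have : - llr μ ν x = Real.log ((ν.rnDeriv μ x).toReal) := by
      rw [← hx, Real.log_exp]
    rw [this]
    exact Real.log_le_sub_one_of_pos hpos
  have h_le2 : ∫ x, ((ν.rnDeriv μ x).toReal - 1) ∂μ ≤ 0 := by
    rw [integral_sub h_int (integrable_const 1), integral_const]
    simp only [measure_univ, probReal_univ, ENNReal.toReal_one, smul_eq_mul, one_mul]
    have : ∫ x, (ν.rnDeriv μ x).toReal ∂μ ≤ (ν Set.univ).toReal := by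
      rw [← setIntegral_univ]
      exact Measure.setIntegral_toReal_rnDeriv_le (measure_ne_top ν _)
    simp only [measure_univ, ENNReal.toReal_one] at this
    linarith
  rw [integral_neg] at h_le
  linarith

/-- The gap between the variational codelength and the Bayesian codelength equals the
KL divergence from the variational distribution `Q` to the posterior. -/
theorem variational_gap_eq_klDiv_posterior
    {Θ : Type*} [MeasurableSpace Θ] (P : Measure Θ) [IsProbabilityMeasure P]
    (L : Θ → ℝ) (hL_meas : Measurable L) (hL_pos : ∀ᵐ θ ∂P, 0 < L θ)
    (hL_int : Integrable L P) (hZ_pos : 0 < ∫ θ, L θ ∂P)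
    (Q : Measure Θ) [IsProbabilityMeasure Q] (hQP : Q ≪ P)
    (hKL : klDiv Q P < ∞) (hlogL : Integrable (fun θ => Real.log (L θ)) Q) :
    ((∫ θ, (- Real.log (L θ)) ∂Q) + (klDiv Q P).toReal)
        - (- Real.log (∫ θ, L θ ∂P))
      = (klDiv Q (P.withDensity fun θ => ENNReal.ofReal (L θ / ∫ θ', L θ' ∂P))).toReal
    ∧ klDiv Q (P.withDensity fun θ => ENNReal.ofReal (L θ / ∫ θ', L θ' ∂P)) < ∞ := by
  set Z := ∫ θ, L θ ∂P with hZ_def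
  set f : Θ → ℝ≥0∞ := fun θ => ENNReal.ofReal (L θ / Z) with hf_def
  set Post : Measure Θ := P.withDensity f with hPost_def
  have hf_meas : Measurable f := (hL_meas.div_const Z).ennreal_ofReal
  have hf_ne_zero : ∀ᵐ θ ∂P, f θ ≠ 0 := by
    filter_upwards [hL_pos] with θ hθ
    simp only [hf_def, ne_eq, ENNReal.ofReal_eq_zero, not_le]
    exact div_pos hθ hZ_pos
  have hf_ne_top : ∀ᵐ θ ∂P, f θ ≠ ∞ := ae_of_all _ fun θ => ENNReal.ofReal_ne_top
  -- Post is a probability measure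
  have hPost_prob : IsProbabilityMeasure Post := by
    constructor
    rw [hPost_def, withDensity_apply _ MeasurableSet.univ, setLIntegral_univ,
      ← ofReal_integral_eq_lintegral_ofReal (hL_int.div_const Z)
        (by filter_upwards [hL_pos] with θ hθ using (div_pos hθ hZ_pos).le)]
    rw [integral_div, div_self hZ_pos.ne']
    simp
  -- absolute continuity
  have hPPost : P ≪ Post := withDensity_absolutelyContinuous' hf_meas.aemeasurable hf_ne_zero
  have hQPost : Q ≪ Post := hQP.trans hPPost
  -- klDiv Q P is finite, so Q ≪ P and llr Q P is integrable
  have h_int_llr : Integrable (llr Q P) Q := by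
    by_contra h
    rw [klDiv, if_neg (fun hc => h hc.2)] at hKL
    exact (lt_irrefl _ hKL)
  -- the key identity for llr Q Post
  have h_rn : Q.rnDeriv Post =ᵐ[P] fun x => (f x)⁻¹ * Q.rnDeriv P x :=
    Measure.rnDeriv_withDensity_right Q P hf_meas.aemeasurable hf_ne_zero hf_ne_top
  have h_llr_eq : llr Q Post =ᵐ[Q] fun x => llr Q P x - Real.log (L x) + Real.log Z := by
    filter_upwards [hQP.ae_le h_rn, hQP.ae_le hL_pos, Measure.rnDeriv_pos hQP,
      hQP.ae_le (Measure.rnDeriv_lt_top Q P)] with x hx hLx hpos htop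
    have hfx : f x = ENNReal.ofReal (L x / Z) := rfl
    have hdiv_pos : 0 < L x / Z := div_pos hLx hZ_pos
    have hfx_ne_zero : f x ≠ 0 := by
      simp [hfx, ENNReal.ofReal_eq_zero, not_le, hdiv_pos]
    have hfx_ne_top : f x ≠ ∞ := ENNReal.ofReal_ne_top
    rw [llr, hx]
    rw [ENNReal.toReal_mul, ENNReal.toReal_inv, hfx, ENNReal.toReal_ofReal hdiv_pos.le]
    rw [Real.log_mul (by positivity) (ENNReal.toReal_pos hpos.ne' htop.ne).ne']
    rw [Real.log_inv, Real.log_div hLx.ne' hZ_pos.ne']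
    rw [llr]
    ring
  -- integrability and integral of llr Q Post
  have h_int_llrPost : Integrable (llr Q Post) Q :=
    (Integrable.add (h_int_llr.sub hlogL) (integrable_const _)).congr h_llr_eq.symm
  have h_integral : ∫ x, llr Q Post x ∂Q
      = ∫ x, llr Q P x ∂Q - ∫ x, Real.log (L x) ∂Q + Real.log Z := by
    rw [integral_congr_ae h_llr_eq]
    have hsub : Integrable (fun x => llr Q P x - Real.log (L x)) Q := h_int_llr.sub hlogL
    rw [integral_add hsub (integrable_const (Real.log Z)),
      integral_sub h_int_llr hlogL, integral_const]
    simp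
  -- expressions for the two klDiv values
  have hklP : klDiv Q P = ENNReal.ofReal (∫ x, llr Q P x ∂Q) := by
    rw [klDiv, if_pos ⟨hQP, h_int_llr⟩]
  have hklPost : klDiv Q Post = ENNReal.ofReal (∫ x, llr Q Post x ∂Q) := by
    rw [klDiv, if_pos ⟨hQPost, h_int_llrPost⟩]
  have h_nonnegP : 0 ≤ ∫ x, llr Q P x ∂Q := integral_llr_nonneg' hQP h_int_llr
  have h_nonnegPost : 0 ≤ ∫ x, llr Q Post x ∂Q := integral_llr_nonneg' hQPost h_int_llrPost
  constructor
  · rw [hklP, hklPost, ENNReal.toReal_ofReal h_nonnegP, ENNReal.toReal_ofReal h_nonnegPost,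
      h_integral, integral_neg]
    ring
  · rw [hklPost]
    exact ENNReal.ofReal_lt_top
end

section
/- Let Θ be a measurable space, P a probability measure on Θ, and L : Θ → ℝ measurable with L(θ) > 0 for P-almost every θ and 0 < Z := ∫ L dP < ∞. Define the posterior Π := P.withDensity (fun θ => ENNReal.ofReal (L θ / Z)). For every probability measure Q on Θ with Q ≪ P, KL(Q‖P) < ∞, and θ ↦ log (L θ) integrable with respect to Q, the variational codelength bounds the Bayesian codelength from above: ∫ (− log (L θ)) dQ(θ) + (KL(Q‖P)).toReal ≥ − log Z, with equality if and only if Q = Π. -/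
open MeasureTheory
open scoped ENNReal NNReal

section aux

open Real in
lemma mul_log_ge_sub_one' {t : ℝ} (ht : 0 ≤ t) : t - 1 ≤ t * log t := by
  rcases eq_or_lt_of_le ht with h | h
  · simp [← h]
  · have h1 : log t⁻¹ + 1 ≤ t⁻¹ := by
      have := Real.add_one_le_exp (log t⁻¹)
      rwa [Real.exp_log (by positivity)] at this
    rw [Real.log_inv] at h1
    have h2 := mul_le_mul_of_nonneg_left h1 h.le
    rw [mul_inv_cancel₀ h.ne'] at h2
    nlinarith

open Real in
lemma mul_log_eq_sub_one_iff' {t : ℝ} (ht : 0 ≤ t) : t * log t = t - 1 ↔ t = 1 := by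
  constructor
  · intro h
    by_contra hne
    rcases eq_or_lt_of_le ht with h0 | h0
    · rw [← h0] at h; norm_num at h
    · have hlog : log t⁻¹ ≠ 0 := by
        simp only [Real.log_inv, ne_eq, neg_eq_zero]
        intro hl
        exact hne (Real.log_eq_zero.mp hl |>.resolve_left h0.ne' |>.resolve_right (by
          intro ht1; linarith))
      have h1 : log t⁻¹ + 1 < t⁻¹ := by
        have := Real.add_one_lt_exp hlog
        rwa [Real.exp_log (by positivity)] at this
      rw [Real.log_inv] at h1
      have h2 := mul_lt_mul_of_pos_left h1 h0
      rw [mul_inv_cancel₀ h0.ne'] at h2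
      nlinarith
  · intro h; simp [h]

/-- Gibbs' inequality with equality case. -/
lemma gibbs_aux {α : Type*} [MeasurableSpace α] (μ ν : Measure α)
    [IsProbabilityMeasure μ] [IsProbabilityMeasure ν] (hμν : μ ≪ ν)
    (h_int : Integrable (llr μ ν) μ) :
    0 ≤ ∫ x, llr μ ν x ∂μ ∧ (∫ x, llr μ ν x ∂μ = 0 ↔ μ = ν) := by
  set f : α → ℝ := fun x => (μ.rnDeriv ν x).toReal with hf
  have h_eq : ∫ x, llr μ ν x ∂μ = ∫ x, f x * Real.log (f x) ∂ν := by
    rw [← integral_rnDeriv_smul hμν (f := llr μ ν)]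
    rfl
  have hf_int : Integrable f ν := Measure.integrable_toReal_rnDeriv
  have hflogf_int : Integrable (fun x => f x * Real.log (f x)) ν := by
    have := (integrable_rnDeriv_smul_iff hμν).mpr h_int
    simpa [smul_eq_mul, llr] using this
  have hf_integral : ∫ x, f x ∂ν = 1 := by
    rw [Measure.integral_toReal_rnDeriv hμν]; simp
  have h_nonneg_ae : ∀ᵐ x ∂ν, f x - 1 ≤ f x * Real.log (f x) :=
    Filter.Eventually.of_forall fun x => mul_log_ge_sub_one' ENNReal.toReal_nonneg
  have h_sub_int : Integrable (fun x => f x - 1) ν := hf_int.sub (integrable_const 1)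
  have h_ge : ∫ x, (f x - 1) ∂ν ≤ ∫ x, f x * Real.log (f x) ∂ν :=
    integral_mono_ae h_sub_int hflogf_int h_nonneg_ae
  have h_sub_eq : ∫ x, (f x - 1) ∂ν = 0 := by
    rw [integral_sub hf_int (integrable_const 1), hf_integral]; simp
  constructor
  · rw [h_eq]; linarith
  constructor
  · intro h0
    have hz : ∫ x, (f x * Real.log (f x) - (f x - 1)) ∂ν = 0 := by
      rw [integral_sub hflogf_int h_sub_int, h_sub_eq, ← h_eq, h0]; simp
    have h_ae : (fun x => f x * Real.log (f x) - (f x - 1)) =ᵐ[ν] 0 := by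
      refine (integral_eq_zero_iff_of_nonneg_ae ?_ (hflogf_int.sub h_sub_int)).mp hz
      filter_upwards [h_nonneg_ae] with x hx
      simp only [Pi.zero_apply, Pi.sub_apply]; linarith
    have h_one : μ.rnDeriv ν =ᵐ[ν] 1 := by
      filter_upwards [h_ae, Measure.rnDeriv_lt_top μ ν] with x hx hx_lt
      have hx' : f x * Real.log (f x) = f x - 1 := by
        have := hx
        simp only [Pi.zero_apply] at this
        linarith
      have hfx : f x = 1 := (mul_log_eq_sub_one_iff' ENNReal.toReal_nonneg).mp hx'
      have h1 : (μ.rnDeriv ν x).toReal = 1 := hfx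
      have : μ.rnDeriv ν x = ENNReal.ofReal ((μ.rnDeriv ν x).toReal) :=
        (ENNReal.ofReal_toReal hx_lt.ne).symm
      rw [this, h1]
      simp
    calc μ = ν.withDensity (μ.rnDeriv ν) := (Measure.withDensity_rnDeriv_eq μ ν hμν).symm
      _ = ν.withDensity 1 := withDensity_congr_ae h_one
      _ = ν := by simp
  · intro h
    subst h
    have : llr μ μ =ᵐ[μ] 0 := by
      filter_upwards [Measure.rnDeriv_self μ] with x hx
      simp [llr, hx]
    rw [integral_congr_ae this]; simp

end aux

/-- The variational codelength bounds the Bayesian codelength `- log Z` from above,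
with equality iff the variational distribution equals the posterior. -/
theorem variational_codelength_ge_bayesian_codelength
    {Θ : Type*} [MeasurableSpace Θ] (P : Measure Θ) [IsProbabilityMeasure P]
    (L : Θ → ℝ) (hL_meas : Measurable L) (hL_pos : ∀ᵐ θ ∂P, 0 < L θ)
    (hL_int : Integrable L P) (hZ_pos : 0 < ∫ θ, L θ ∂P)
    (Q : Measure Θ) [IsProbabilityMeasure Q] (hQP : Q ≪ P)
    (hKL : klDiv Q P < ∞) (hlogL : Integrable (fun θ => Real.log (L θ)) Q) :
    (∫ θ, (- Real.log (L θ)) ∂Q) + (klDiv Q P).toReal ≥ - Real.log (∫ θ, L θ ∂P)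
    ∧ ((∫ θ, (- Real.log (L θ)) ∂Q) + (klDiv Q P).toReal = - Real.log (∫ θ, L θ ∂P)
        ↔ Q = P.withDensity fun θ => ENNReal.ofReal (L θ / ∫ θ', L θ' ∂P)) := by
  have hc : Q ≪ P ∧ Integrable (llr Q P) Q := by
    by_contra h
    simp only [klDiv, if_neg h, lt_irrefl] at hKL
  have hllrQP := hc.2
  set f : Θ → ℝ := fun θ => Real.log (L θ) with hfdef
  have he : (fun θ => Real.exp (f θ)) =ᵐ[P] L := by
    filter_upwards [hL_pos] with θ hθ using Real.exp_log hθ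
  have hexp_int : Integrable (fun θ => Real.exp (f θ)) P := hL_int.congr he.symm
  have hZeq : ∫ θ, Real.exp (f θ) ∂P = ∫ θ, L θ ∂P := integral_congr_ae he
  have hTprob : IsProbabilityMeasure (P.tilted f) := isProbabilityMeasure_tilted hexp_int
  have hPT : P ≪ P.tilted f := absolutelyContinuous_tilted hexp_int
  have hQT : Q ≪ P.tilted f := hQP.trans hPT
  have h_int_llrT : Integrable (llr Q (P.tilted f)) Q :=
    integrable_llr_tilted_right hQP hlogL hllrQP hexp_int
  have h_eq : ∫ θ, llr Q (P.tilted f) θ ∂Q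
      = ∫ θ, llr Q P θ ∂Q - ∫ θ, f θ ∂Q + Real.log (∫ θ, L θ ∂P) := by
    rw [integral_llr_tilted_right hQP hlogL hexp_int hllrQP, hZeq]
  have hgibbsQP := gibbs_aux Q P hQP hllrQP
  have hKLval : (klDiv Q P).toReal = ∫ θ, llr Q P θ ∂Q := by
    simp only [klDiv, if_pos hc]
    exact ENNReal.toReal_ofReal hgibbsQP.1
  have hgibbs := gibbs_aux Q (P.tilted f) hQT h_int_llrT
  have hneg : ∫ θ, (- Real.log (L θ)) ∂Q = - ∫ θ, f θ ∂Q := by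
    rw [← integral_neg]
  have hkey : (∫ θ, (- Real.log (L θ)) ∂Q) + (klDiv Q P).toReal
      - (- Real.log (∫ θ, L θ ∂P)) = ∫ θ, llr Q (P.tilted f) θ ∂Q := by
    rw [hKLval, hneg, h_eq]; ring
  have hT_eq : P.tilted f = P.withDensity fun θ => ENNReal.ofReal (L θ / ∫ θ', L θ' ∂P) := by
    rw [Measure.tilted, hZeq]
    apply withDensity_congr_ae
    filter_upwards [hL_pos] with θ hθ
    rw [Real.exp_log hθ]
  constructor
  · linarith [hgibbs.1]
  · rw [← hT_eq]
    constructor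
    · intro h
      exact hgibbs.2.mp (by linarith)
    · intro h
      have := hgibbs.2.mpr h
      linarith
end

section
/- Let γ := gaussianReal 0 1, let v : ℝ → ℝ≥0 be a measurable function with ∫ y, (v y : ℝ) ∂γ < ∞ (v integrable with respect to γ), such that the map y ↦ gaussianReal 0 (v y) is a measurable family of measures, and define the Gaussian scale mixture μ := γ.bind (fun y => gaussianReal 0 (v y)). Then μ is a probability measure and its second moment equals the mean mixture variance: ∫ x, x² ∂μ = ∫ y, (v y : ℝ) ∂γ. -/
open MeasureTheory ProbabilityTheory Real Set
open scoped ENNReal NNReal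

private lemma rpow_two_eq (x : ℝ) : x ^ (2:ℝ) = x ^ 2 := by
  rw [show ((2:ℝ)) = ((2:ℕ):ℝ) by norm_num, Real.rpow_natCast]

private lemma integrable_sq_mul_exp {b : ℝ} (hb : 0 < b) :
    Integrable (fun x : ℝ => x ^ 2 * Real.exp (-b * x ^ 2)) := by
  have h := integrable_rpow_mul_exp_neg_mul_sq hb (s := 2) (by norm_num)
  simpa only [rpow_two_eq] using h

private lemma integral_sq_mul_exp {b : ℝ} (hb : 0 < b) :
    ∫ x : ℝ, x ^ 2 * Real.exp (-b * x ^ 2) = b ^ (-(3:ℝ)/2) * (Real.sqrt π / 2) := by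
  have hInt := integrable_sq_mul_exp hb
  have hIoi : ∫ x in Ioi (0:ℝ), x ^ 2 * Real.exp (-b * x ^ 2)
      = b ^ (-(3:ℝ)/2) * (1/2) * Real.Gamma (3/2) := by
    have h := integral_rpow_mul_exp_neg_mul_rpow (p := 2) (q := 2) (b := b)
      (by norm_num) (by norm_num) hb
    simp only [rpow_two_eq] at h
    rw [h]
    norm_num
  have hGamma : Real.Gamma (3/2) = Real.sqrt π / 2 := by
    have h : Real.Gamma (1/2 + 1) = (1/2) * Real.Gamma (1/2) :=
      Real.Gamma_add_one (by norm_num)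
    rw [show (3:ℝ)/2 = 1/2 + 1 by norm_num, h, Real.Gamma_one_half_eq]
    ring
  have h := integral_comp_neg_Ioi (0:ℝ) (fun x => x ^ 2 * Real.exp (-b * x ^ 2))
  simp only [neg_sq, neg_zero] at h
  have hsplit := intervalIntegral.integral_Iic_add_Ioi (b := (0:ℝ)) (μ := volume)
    hInt.integrableOn hInt.integrableOn
  rw [← hsplit, ← h, hIoi, hGamma]
  ring

private lemma gaussianPDFReal_zero_eq (w : ℝ≥0) (x : ℝ) :
    x ^ 2 * gaussianPDFReal 0 w x
      = (Real.sqrt (2 * π * (w:ℝ)))⁻¹ * (x ^ 2 * Real.exp (-(2 * (w:ℝ))⁻¹ * x ^ 2)) := by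
  simp only [gaussianPDFReal, sub_zero]
  rw [show -x ^ 2 / (2 * (w:ℝ)) = -(2 * (w:ℝ))⁻¹ * x ^ 2 by ring]
  ring

private lemma integrable_sq_mul_gaussianPDFReal {w : ℝ≥0} (hw : w ≠ 0) :
    Integrable (fun x : ℝ => x ^ 2 * gaussianPDFReal 0 w x) := by
  have hW : 0 < (w:ℝ) := by positivity
  have hb : 0 < (2 * (w:ℝ))⁻¹ := by positivity
  simp only [gaussianPDFReal_zero_eq]
  exact (integrable_sq_mul_exp hb).const_mul _

private lemma integral_sq_mul_gaussianPDFReal {w : ℝ≥0} (hw : w ≠ 0) :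
    ∫ x : ℝ, x ^ 2 * gaussianPDFReal 0 w x = w := by
  have hW : 0 < (w:ℝ) := by positivity
  have hb : 0 < (2 * (w:ℝ))⁻¹ := by positivity
  simp only [gaussianPDFReal_zero_eq]
  rw [integral_const_mul, integral_sq_mul_exp hb]
  -- numeric identity
  have h2W : (0:ℝ) < 2 * (w:ℝ) := by positivity
  rw [show ((-3:ℝ))/2 = -((3:ℝ)/2) by norm_num, Real.rpow_neg (le_of_lt (inv_pos.mpr h2W)), Real.inv_rpow (le_of_lt h2W), inv_inv,
    show (2 * π * (w:ℝ)) = (2 * (w:ℝ)) * π by ring,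
    Real.sqrt_mul (le_of_lt h2W), Real.sqrt_eq_rpow (2 * (w:ℝ)),
    show ((3:ℝ)/2) = 1/2 + 1 by norm_num, Real.rpow_add h2W, Real.rpow_one]
  have h1 : (2 * (w:ℝ)) ^ ((1:ℝ)/2) > 0 := Real.rpow_pos_of_pos h2W _
  have h2 : Real.sqrt π > 0 := Real.sqrt_pos.mpr Real.pi_pos
  field_simp

private lemma lintegral_sq_gaussianReal (w : ℝ≥0) :
    ∫⁻ x, ENNReal.ofReal (x ^ 2) ∂(gaussianReal 0 w) = ENNReal.ofReal (w:ℝ) := by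
  by_cases hw : w = 0
  · subst hw
    rw [gaussianReal_zero_var]
    simp [lintegral_dirac]
  · rw [gaussianReal_of_var_ne_zero 0 hw,
      lintegral_withDensity_eq_lintegral_mul _ (measurable_gaussianPDF 0 w)
        (by fun_prop : Measurable fun x : ℝ => ENNReal.ofReal (x ^ 2))]
    have heq : ∀ x : ℝ, gaussianPDF 0 w x * ENNReal.ofReal (x ^ 2)
        = ENNReal.ofReal (x ^ 2 * gaussianPDFReal 0 w x) := fun x => by
      rw [gaussianPDF, ← ENNReal.ofReal_mul (gaussianPDFReal_nonneg 0 w x), mul_comm]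
    simp only [Pi.mul_apply, heq]
    rw [← ofReal_integral_eq_lintegral_ofReal (integrable_sq_mul_gaussianPDFReal hw)
        (Filter.Eventually.of_forall fun x =>
          mul_nonneg (sq_nonneg x) (gaussianPDFReal_nonneg 0 w x)),
      integral_sq_mul_gaussianPDFReal hw]

/-- A Gaussian scale mixture over a standard Gaussian mixing measure is a probability
measure whose second moment equals the mean mixture variance. -/
theorem gaussian_scale_mixture_second_moment
    (v : ℝ → ℝ≥0) (hv : Measurable v)
    (hker : Measurable fun y => gaussianReal 0 (v y))
    (hint : Integrable (fun y => (v y : ℝ)) (gaussianReal 0 1)) :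
    IsProbabilityMeasure ((gaussianReal 0 1).bind fun y => gaussianReal 0 (v y))
    ∧ ∫ x, x ^ 2 ∂((gaussianReal 0 1).bind fun y => gaussianReal 0 (v y))
        = ∫ y, (v y : ℝ) ∂(gaussianReal 0 1) := by
  have hprob : IsProbabilityMeasure ((gaussianReal 0 1).bind fun y => gaussianReal 0 (v y)) := by
    constructor
    rw [Measure.bind_apply MeasurableSet.univ hker.aemeasurable]
    simp
  refine ⟨hprob, ?_⟩
  have hnn : (0:ℝ → ℝ) ≤ᵐ[(gaussianReal 0 1).bind fun y => gaussianReal 0 (v y)]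
      fun x => x ^ 2 := Filter.Eventually.of_forall fun x => sq_nonneg x
  rw [integral_eq_lintegral_of_nonneg_ae hnn
    ((by fun_prop : Measurable fun x : ℝ => x ^ 2).aestronglyMeasurable),
    Measure.lintegral_bind hker.aemeasurable (by fun_prop : Measurable fun x : ℝ => ENNReal.ofReal (x ^ 2)).aemeasurable]
  simp only [lintegral_sq_gaussianReal]
  rw [← ofReal_integral_eq_lintegral_ofReal hint
      (Filter.Eventually.of_forall fun y => (v y).coe_nonneg),
    ENNReal.toReal_ofReal (integral_nonneg fun y => (v y).coe_nonneg)]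
end

section
/- Let γ := gaussianReal 0 1, let v : ℝ → ℝ≥0 be measurable with ∫ y, ((v y : ℝ))² ∂γ < ∞, such that y ↦ gaussianReal 0 (v y) is a measurable family of measures, and define μ := γ.bind (fun y => gaussianReal 0 (v y)). If v is not γ-almost-everywhere equal to a constant, then μ is not a Gaussian measure; that is, for all m : ℝ and t : ℝ≥0, μ ≠ gaussianReal m t. (Indeed, ∫ x⁴ dμ = 3∫ v² dγ > 3(∫ v dγ)² = 3(∫ x² dμ)², whereas every Gaussian measure satisfies ∫ x⁴ = 3(∫ x²)² when centered.) -/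
open MeasureTheory ProbabilityTheory Real Set
open scoped ENNReal NNReal

namespace GSMaux

lemma sqrt2pi_pos : 0 < Real.sqrt (2 * π) := Real.sqrt_pos.2 (by positivity)

lemma int_pow_exp (k : ℕ) :
    Integrable (fun x : ℝ => x ^ k * Real.exp (-(1/2) * x ^ 2)) := by
  have h := integrable_rpow_mul_exp_neg_mul_sq (by norm_num : (0:ℝ) < 1/2)
    (s := (k : ℝ)) (lt_of_lt_of_le neg_one_lt_zero (Nat.cast_nonneg k))
  simpa [Real.rpow_natCast] using h

lemma J0 : ∫ x : ℝ, Real.exp (-(1/2) * x ^ 2) = Real.sqrt (2 * π) := by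
  have h := integral_gaussian (1/2)
  rw [h]
  rw [show π / (1/2) = 2 * π by ring]

lemma rpow_two_pow (x : ℝ) : x ^ (2:ℝ) = x ^ 2 := by
  rw [show (2:ℝ) = ((2:ℕ):ℝ) by norm_num, Real.rpow_natCast]

lemma rpow_four_pow (x : ℝ) : x ^ (4:ℝ) = x ^ 4 := by
  rw [show (4:ℝ) = ((4:ℕ):ℝ) by norm_num, Real.rpow_natCast]

lemma two_rpow_half : (2:ℝ) ^ ((1:ℝ)/2) = Real.sqrt 2 := by
  rw [Real.sqrt_eq_rpow]

lemma J2 : ∫ x : ℝ, x ^ 2 * Real.exp (-(1/2) * x ^ 2) = Real.sqrt (2 * π) := by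
  have habs : (fun x : ℝ => x ^ 2 * Real.exp (-(1/2) * x ^ 2))
      = fun x : ℝ => |x| ^ 2 * Real.exp (-(1/2) * |x| ^ 2) := by
    funext x; rw [sq_abs]
  rw [habs, integral_comp_abs (f := fun x : ℝ => x ^ 2 * Real.exp (-(1/2) * x ^ 2))]
  have hconv : ∫ x in Ioi (0:ℝ), x ^ 2 * Real.exp (-(1/2) * x ^ 2)
      = ∫ x in Ioi (0:ℝ), x ^ (2:ℝ) * Real.exp (-(1/2) * x ^ (2:ℝ)) := by
    refine setIntegral_congr_fun measurableSet_Ioi (fun x _ => ?_)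
    rw [rpow_two_pow]
  rw [hconv, integral_rpow_mul_exp_neg_mul_rpow (by norm_num : (0:ℝ) < 2)
    (by norm_num : (-1:ℝ) < 2) (by norm_num : (0:ℝ) < 1/2)]
  have hG : Real.Gamma (((2:ℝ) + 1) / 2) = Real.sqrt π / 2 := by
    rw [show ((2:ℝ)+1)/2 = 1/2 + 1 by norm_num,
      Real.Gamma_add_one (by norm_num : (1:ℝ)/2 ≠ 0), Real.Gamma_one_half_eq]
    ring
  have hb : ((1:ℝ)/2) ^ (-((2:ℝ) + 1) / 2) = 2 * Real.sqrt 2 := by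
    rw [show ((1:ℝ)/2) = 2⁻¹ by norm_num,
      Real.inv_rpow (by norm_num : (0:ℝ) ≤ 2), ← Real.rpow_neg (by norm_num : (0:ℝ) ≤ 2)]
    rw [show -(-((2:ℝ)+1)/2) = 1 + 1/2 by norm_num,
      Real.rpow_add (by norm_num : (0:ℝ) < 2), Real.rpow_one, two_rpow_half]
  rw [hG, hb, Real.sqrt_mul (by norm_num : (0:ℝ) ≤ 2)]
  ring

lemma J4 : ∫ x : ℝ, x ^ 4 * Real.exp (-(1/2) * x ^ 2) = 3 * Real.sqrt (2 * π) := by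
  have habs : (fun x : ℝ => x ^ 4 * Real.exp (-(1/2) * x ^ 2))
      = fun x : ℝ => |x| ^ 4 * Real.exp (-(1/2) * |x| ^ 2) := by
    funext x
    rw [sq_abs, pow_abs, abs_of_nonneg (by positivity : (0:ℝ) ≤ x ^ 4)]
  rw [habs, integral_comp_abs (f := fun x : ℝ => x ^ 4 * Real.exp (-(1/2) * x ^ 2))]
  have hconv : ∫ x in Ioi (0:ℝ), x ^ 4 * Real.exp (-(1/2) * x ^ 2)
      = ∫ x in Ioi (0:ℝ), x ^ (4:ℝ) * Real.exp (-(1/2) * x ^ (2:ℝ)) := by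
    refine setIntegral_congr_fun measurableSet_Ioi (fun x _ => ?_)
    rw [rpow_two_pow, rpow_four_pow]
  rw [hconv, integral_rpow_mul_exp_neg_mul_rpow (by norm_num : (0:ℝ) < 2)
    (by norm_num : (-1:ℝ) < 4) (by norm_num : (0:ℝ) < 1/2)]
  have hG : Real.Gamma (((4:ℝ) + 1) / 2) = 3 * Real.sqrt π / 4 := by
    rw [show ((4:ℝ)+1)/2 = 3/2 + 1 by norm_num,
      Real.Gamma_add_one (by norm_num : (3:ℝ)/2 ≠ 0),
      show (3:ℝ)/2 = 1/2 + 1 by norm_num,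
      Real.Gamma_add_one (by norm_num : (1:ℝ)/2 ≠ 0), Real.Gamma_one_half_eq]
    ring
  have hb : ((1:ℝ)/2) ^ (-((4:ℝ) + 1) / 2) = 4 * Real.sqrt 2 := by
    rw [show ((1:ℝ)/2) = 2⁻¹ by norm_num,
      Real.inv_rpow (by norm_num : (0:ℝ) ≤ 2), ← Real.rpow_neg (by norm_num : (0:ℝ) ≤ 2)]
    rw [show -(-((4:ℝ)+1)/2) = 2 + 1/2 by norm_num,
      Real.rpow_add (by norm_num : (0:ℝ) < 2), two_rpow_half,
      show ((2:ℝ) ^ (2:ℝ)) = 4 by rw [rpow_two_pow]; norm_num]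
  rw [hG, hb, Real.sqrt_mul (by norm_num : (0:ℝ) ≤ 2)]
  ring

lemma pdf01 (x : ℝ) :
    gaussianPDFReal 0 1 x = (Real.sqrt (2 * π))⁻¹ * Real.exp (-(1/2) * x ^ 2) := by
  rw [gaussianPDFReal]
  norm_num
  left
  ring_nf

lemma gauss01_eq : gaussianReal 0 1
    = (volume : Measure ℝ).withDensity
        (fun x => ((gaussianPDFReal 0 1 x).toNNReal : ℝ≥0∞)) := by
  rw [gaussianReal_of_var_ne_zero 0 one_ne_zero]
  rfl

lemma integral_gauss01 (g : ℝ → ℝ) :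
    ∫ x, g x ∂(gaussianReal 0 1) = ∫ x, gaussianPDFReal 0 1 x * g x := by
  rw [gauss01_eq, integral_withDensity_eq_integral_smul
    ((measurable_gaussianPDFReal 0 1).real_toNNReal) g]
  congr 1
  funext x
  rw [NNReal.smul_def, Real.coe_toNNReal _ (gaussianPDFReal_nonneg 0 1 x), smul_eq_mul]

lemma integrable_gauss01_iff (g : ℝ → ℝ) :
    Integrable g (gaussianReal 0 1) ↔
      Integrable (fun x => gaussianPDFReal 0 1 x * g x) volume := by
  rw [gauss01_eq, integrable_withDensity_iff_integrable_coe_smul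
    ((measurable_gaussianPDFReal 0 1).real_toNNReal)]
  constructor <;> intro h <;> refine h.congr ?_ <;> filter_upwards with x <;>
    rw [smul_eq_mul, Real.coe_toNNReal _ (gaussianPDFReal_nonneg 0 1 x)]


lemma integrable_pow_gauss01 (k : ℕ) :
    Integrable (fun x : ℝ => x ^ k) (gaussianReal 0 1) := by
  rw [integrable_gauss01_iff]
  have : (fun x : ℝ => gaussianPDFReal 0 1 x * x ^ k)
      = fun x : ℝ => (Real.sqrt (2 * π))⁻¹ * (x ^ k * Real.exp (-(1/2) * x ^ 2)) := by
    funext x; rw [pdf01]; ring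
  rw [this]
  exact (int_pow_exp k).const_mul _

lemma integral_pow_gauss01 (k : ℕ) :
    ∫ x, x ^ k ∂(gaussianReal 0 1)
      = (Real.sqrt (2 * π))⁻¹ * ∫ x : ℝ, x ^ k * Real.exp (-(1/2) * x ^ 2) := by
  rw [integral_gauss01]
  rw [← integral_const_mul]
  congr 1
  funext x; rw [pdf01]; ring

lemma M2 : ∫ x, x ^ 2 ∂(gaussianReal 0 1) = 1 := by
  rw [integral_pow_gauss01, J2, inv_mul_cancel₀ (ne_of_gt sqrt2pi_pos)]

lemma M4 : ∫ x, x ^ 4 ∂(gaussianReal 0 1) = 3 := by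
  rw [integral_pow_gauss01, J4, ← mul_assoc, mul_comm _ (3:ℝ), mul_assoc,
    inv_mul_cancel₀ (ne_of_gt sqrt2pi_pos), mul_one]

lemma map_neg_gauss01 :
    (gaussianReal 0 1).map (fun x => -x) = gaussianReal 0 1 := by
  have h := gaussianReal_map_const_mul (μ := 0) (v := 1) (-1)
  have h1 : ((-1 : ℝ) * ·) = (fun x : ℝ => -x) := by funext x; ring
  have h2 : (NNReal.mk ((-1:ℝ)^2) (sq_nonneg _) * 1 : ℝ≥0) = 1 := by
    refine NNReal.coe_injective ?_
    norm_num
  rw [h1, h2] at h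
  simpa using h

lemma Modd (k : ℕ) (hk : Odd k) : ∫ x, x ^ k ∂(gaussianReal 0 1) = 0 := by
  have h1 : ∫ x, x ^ k ∂(gaussianReal 0 1)
      = ∫ x, (-x) ^ k ∂(gaussianReal 0 1) := by
    conv_lhs => rw [← map_neg_gauss01]
    rw [integral_map measurable_neg.aemeasurable
      (continuous_pow k).aestronglyMeasurable]
  simp only [hk.neg_pow] at h1
  rw [integral_neg] at h1
  linarith

lemma gauss_map (m : ℝ) (t : ℝ≥0) (ht : t ≠ 0) :
    gaussianReal m t
      = (gaussianReal 0 1).map (fun x => Real.sqrt t * x + m) := by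
  have h1 : (gaussianReal 0 1).map ((Real.sqrt t) * ·) = gaussianReal 0 t := by
    rw [gaussianReal_map_const_mul]
    congr 1
    · ring
    · refine NNReal.coe_injective ?_
      simp [Real.sq_sqrt t.coe_nonneg]
  have h2 := gaussianReal_map_add_const (μ := 0) (v := t) m
  rw [← h1, Measure.map_map (measurable_add_const m)
    (measurable_const_mul _)] at h2
  rw [zero_add] at h2
  rw [← h2]
  rfl

lemma integrable_pow_gauss (m : ℝ) (t : ℝ≥0) (k : ℕ) (hk : k = 2 ∨ k = 4) :
    Integrable (fun x : ℝ => x ^ k) (gaussianReal m t) := by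
  by_cases ht : t = 0
  · subst ht
    rw [gaussianReal_zero_var]
    exact (integrable_const _).congr (ae_eq_dirac (fun x : ℝ => x ^ k)).symm
  · set s := Real.sqrt t with hs
    have hst : s ^ 2 = (t : ℝ) := Real.sq_sqrt t.coe_nonneg
    rw [gauss_map m t ht]
    have hφ : Measurable (fun x : ℝ => s * x + m) :=
      (measurable_id.const_mul s).add_const m
    rw [integrable_map_measure (continuous_pow k).aestronglyMeasurable
      hφ.aemeasurable]
    have hpoly : ∀ j : ℕ, ∀ c : ℝ,
        Integrable (fun x : ℝ => c * x ^ j) (gaussianReal 0 1) :=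
      fun j c => (integrable_pow_gauss01 j).const_mul c
    rcases hk with rfl | rfl
    · have e2 : ((fun x : ℝ => x ^ 2) ∘ fun x => s * x + m)
          = fun x : ℝ => s ^ 2 * x ^ 2 + ((2 * s * m) * x ^ 1 + m ^ 2 * x ^ 0) := by
        funext x; simp only [Function.comp]; ring
      rw [e2]
      exact (hpoly 2 _).add ((hpoly 1 _).add (hpoly 0 _))
    · have e4 : ((fun x : ℝ => x ^ 4) ∘ fun x => s * x + m)
          = fun x : ℝ => s ^ 4 * x ^ 4 + ((4 * s ^ 3 * m) * x ^ 3
            + ((6 * s ^ 2 * m ^ 2) * x ^ 2 + ((4 * s * m ^ 3) * x ^ 1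
            + m ^ 4 * x ^ 0))) := by
        funext x; simp only [Function.comp]; ring
      rw [e4]
      exact (hpoly 4 _).add ((hpoly 3 _).add ((hpoly 2 _).add
        ((hpoly 1 _).add (hpoly 0 _))))

lemma integral_sq_gauss (m : ℝ) (t : ℝ≥0) :
    ∫ x, x ^ 2 ∂(gaussianReal m t) = m ^ 2 + t := by
  by_cases ht : t = 0
  · subst ht
    rw [gaussianReal_zero_var, integral_dirac]
    simp
  · set s := Real.sqrt t with hs
    have hst : s ^ 2 = (t : ℝ) := Real.sq_sqrt t.coe_nonneg
    have hφ : Measurable (fun x : ℝ => s * x + m) :=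
      (measurable_id.const_mul s).add_const m
    rw [gauss_map m t ht, integral_map hφ.aemeasurable
      (continuous_pow 2).aestronglyMeasurable]
    have e2 : (fun x : ℝ => (s * x + m) ^ 2)
        = fun x : ℝ => s ^ 2 * x ^ 2 + ((2 * s * m) * x ^ 1 + m ^ 2 * x ^ 0) := by
      funext x; ring
    rw [e2]
    have hpoly : ∀ j : ℕ, ∀ c : ℝ,
        Integrable (fun x : ℝ => c * x ^ j) (gaussianReal 0 1) :=
      fun j c => (integrable_pow_gauss01 j).const_mul c
    have i10 : Integrable (fun x : ℝ => (2 * s * m) * x ^ 1 + m ^ 2 * x ^ 0)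
        (gaussianReal 0 1) := by exact (hpoly 1 _).add (hpoly 0 _)
    rw [integral_add (hpoly 2 _) i10,
      integral_add (hpoly 1 _) (hpoly 0 _),
      integral_const_mul, integral_const_mul, integral_const_mul,
      M2, Modd 1 odd_one]
    simp only [pow_zero]
    rw [integral_const]
    simp [hst]
    ring

lemma integral_pow4_gauss (m : ℝ) (t : ℝ≥0) :
    ∫ x, x ^ 4 ∂(gaussianReal m t)
      = m ^ 4 + 6 * m ^ 2 * t + 3 * t ^ 2 := by
  by_cases ht : t = 0
  · subst ht
    rw [gaussianReal_zero_var, integral_dirac]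
    simp
  · set s := Real.sqrt t with hs
    have hst : s ^ 2 = (t : ℝ) := Real.sq_sqrt t.coe_nonneg
    have hφ : Measurable (fun x : ℝ => s * x + m) :=
      (measurable_id.const_mul s).add_const m
    rw [gauss_map m t ht, integral_map hφ.aemeasurable
      (continuous_pow 4).aestronglyMeasurable]
    have e4 : (fun x : ℝ => (s * x + m) ^ 4)
        = fun x : ℝ => s ^ 4 * x ^ 4 + ((4 * s ^ 3 * m) * x ^ 3
          + ((6 * s ^ 2 * m ^ 2) * x ^ 2 + ((4 * s * m ^ 3) * x ^ 1
          + m ^ 4 * x ^ 0))) := by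
      funext x; ring
    rw [e4]
    have hpoly : ∀ j : ℕ, ∀ c : ℝ,
        Integrable (fun x : ℝ => c * x ^ j) (gaussianReal 0 1) :=
      fun j c => (integrable_pow_gauss01 j).const_mul c
    have i10 : Integrable (fun x : ℝ => (4 * s * m ^ 3) * x ^ 1 + m ^ 4 * x ^ 0)
        (gaussianReal 0 1) := by exact (hpoly 1 _).add (hpoly 0 _)
    have i210 : Integrable (fun x : ℝ => (6 * s ^ 2 * m ^ 2) * x ^ 2
        + ((4 * s * m ^ 3) * x ^ 1 + m ^ 4 * x ^ 0)) (gaussianReal 0 1) := by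
      exact (hpoly 2 _).add i10
    have i3210 : Integrable (fun x : ℝ => (4 * s ^ 3 * m) * x ^ 3
        + ((6 * s ^ 2 * m ^ 2) * x ^ 2 + ((4 * s * m ^ 3) * x ^ 1 + m ^ 4 * x ^ 0)))
        (gaussianReal 0 1) := by exact (hpoly 3 _).add i210
    rw [integral_add (hpoly 4 _) i3210,
      integral_add (hpoly 3 _) i210,
      integral_add (hpoly 2 _) i10,
      integral_add (hpoly 1 _) (hpoly 0 _),
      integral_const_mul, integral_const_mul, integral_const_mul, integral_const_mul,
      integral_const_mul, M4, M2, Modd 1 odd_one, Modd 3 (by decide)]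
    simp only [pow_zero]
    rw [integral_const]
    have hst2 : s ^ 4 = (t : ℝ) ^ 2 := by
      rw [show s ^ 4 = (s ^ 2) ^ 2 by ring, hst]
    simp [hst2, hst]
    ring

theorem main
    (v : ℝ → ℝ≥0) (hv : Measurable v)
    (hker : Measurable fun y => gaussianReal 0 (v y))
    (hint : Integrable (fun y => ((v y : ℝ)) ^ 2) (gaussianReal 0 1))
    (hvc : ∀ c : ℝ≥0, ¬ (v =ᵐ[gaussianReal 0 1] fun _ => c)) :
    ∀ (m : ℝ) (t : ℝ≥0),
      (gaussianReal 0 1).bind (fun y => gaussianReal 0 (v y)) ≠ gaussianReal m t := by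
  intro m t h
  set γ := gaussianReal 0 1 with hγ
  -- integrability of v
  have hv1 : Integrable (fun y => ((v y : ℝ))) γ := by
    refine (hint.add (integrable_const 1)).mono'
      (hv.coe_nnreal_real.aestronglyMeasurable) ?_
    filter_upwards with y
    rw [Real.norm_eq_abs, abs_of_nonneg (v y).coe_nonneg]
    simp only [Pi.add_apply]
    nlinarith [(v y).coe_nonneg, sq_nonneg ((v y : ℝ) - 1)]
  -- lintegral of x^2 over the mixture
  have hmeas2 : Measurable fun x : ℝ => ENNReal.ofReal (x ^ 2) :=
    (measurable_id.pow_const 2).ennreal_ofReal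
  have hmeas4 : Measurable fun x : ℝ => ENNReal.ofReal (x ^ 4) :=
    (measurable_id.pow_const 4).ennreal_ofReal
  have hL2 : ∫⁻ x, ENNReal.ofReal (x ^ 2) ∂(γ.bind fun y => gaussianReal 0 (v y))
      = ENNReal.ofReal (∫ y, ((v y : ℝ)) ∂γ) := by
    rw [Measure.lintegral_bind hker.aemeasurable hmeas2.aemeasurable]
    have hinner : ∀ y : ℝ, ∫⁻ x, ENNReal.ofReal (x ^ 2) ∂(gaussianReal 0 (v y))
        = ENNReal.ofReal ((v y : ℝ)) := by
      intro y
      rw [← ofReal_integral_eq_lintegral_ofReal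
        (integrable_pow_gauss 0 (v y) 2 (Or.inl rfl))
        (Filter.Eventually.of_forall fun x => sq_nonneg x)]
      rw [integral_sq_gauss]
      norm_num
    simp_rw [hinner]
    rw [← ofReal_integral_eq_lintegral_ofReal hv1
      (Filter.Eventually.of_forall fun y => (v y).coe_nonneg)]
  have hL4 : ∫⁻ x, ENNReal.ofReal (x ^ 4) ∂(γ.bind fun y => gaussianReal 0 (v y))
      = ENNReal.ofReal (3 * ∫ y, ((v y : ℝ)) ^ 2 ∂γ) := by
    rw [Measure.lintegral_bind hker.aemeasurable hmeas4.aemeasurable]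
    have hinner : ∀ y : ℝ, ∫⁻ x, ENNReal.ofReal (x ^ 4) ∂(gaussianReal 0 (v y))
        = ENNReal.ofReal (3 * ((v y : ℝ)) ^ 2) := by
      intro y
      rw [← ofReal_integral_eq_lintegral_ofReal
        (integrable_pow_gauss 0 (v y) 4 (Or.inr rfl))
        (Filter.Eventually.of_forall fun x => by positivity)]
      rw [integral_pow4_gauss]
      norm_num
    simp_rw [hinner]
    rw [← ofReal_integral_eq_lintegral_ofReal (hint.const_mul 3)
      (Filter.Eventually.of_forall fun y => by positivity),
      integral_const_mul]
  -- Gaussian side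
  have hG2 : ∫⁻ x, ENNReal.ofReal (x ^ 2) ∂(gaussianReal m t)
      = ENNReal.ofReal (m ^ 2 + t) := by
    rw [← ofReal_integral_eq_lintegral_ofReal
      (integrable_pow_gauss m t 2 (Or.inl rfl))
      (Filter.Eventually.of_forall fun x => sq_nonneg x), integral_sq_gauss]
  have hG4 : ∫⁻ x, ENNReal.ofReal (x ^ 4) ∂(gaussianReal m t)
      = ENNReal.ofReal (m ^ 4 + 6 * m ^ 2 * t + 3 * t ^ 2) := by
    rw [← ofReal_integral_eq_lintegral_ofReal
      (integrable_pow_gauss m t 4 (Or.inr rfl))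
      (Filter.Eventually.of_forall fun x => by positivity), integral_pow4_gauss]
  -- match moments
  set A := ∫ y, ((v y : ℝ)) ∂γ with hA
  set B := ∫ y, ((v y : ℝ)) ^ 2 ∂γ with hB
  have hA0 : 0 ≤ A := integral_nonneg fun y => (v y).coe_nonneg
  have hB0 : 0 ≤ B := integral_nonneg fun y => sq_nonneg _
  have eq2 : A = m ^ 2 + t := by
    have := hL2
    rw [h, hG2] at this
    rw [← ENNReal.ofReal_eq_ofReal_iff hA0 (by positivity)]
    exact this.symm
  have eq4 : 3 * B = m ^ 4 + 6 * m ^ 2 * t + 3 * t ^ 2 := by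
    have := hL4
    rw [h, hG4] at this
    rw [← ENNReal.ofReal_eq_ofReal_iff (by linarith) (by positivity)]
    exact this.symm
  -- strict Cauchy-Schwarz
  have hCS : A ^ 2 < B := by
    by_contra hle
    push_neg at hle
    have hgi : Integrable (fun y => ((v y : ℝ) - A) ^ 2) γ := by
      have e : (fun y => ((v y : ℝ) - A) ^ 2)
          = fun y => ((v y : ℝ)) ^ 2 - (2 * A) * ((v y : ℝ)) + A ^ 2 * 1 := by
        funext y; ring
      rw [e]
      exact ((hint.sub (hv1.const_mul (2 * A))).add ((integrable_const 1).const_mul (A ^ 2)))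
    have hI : ∫ y, ((v y : ℝ) - A) ^ 2 ∂γ = B - A ^ 2 := by
      have e : (fun y => ((v y : ℝ) - A) ^ 2)
          = fun y => ((v y : ℝ)) ^ 2 - (2 * A) * ((v y : ℝ)) + A ^ 2 * 1 := by
        funext y; ring
      have isub : Integrable (fun y => ((v y : ℝ)) ^ 2 - (2 * A) * ((v y : ℝ))) γ := by
        exact hint.sub (hv1.const_mul (2 * A))
      rw [e, integral_add isub ((integrable_const 1).const_mul (A ^ 2)),
        integral_sub hint (hv1.const_mul (2 * A)), integral_const_mul,
        integral_const_mul, integral_const]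
      simp [← hA, ← hB]
      ring
    have hI0 : ∫ y, ((v y : ℝ) - A) ^ 2 ∂γ = 0 := by
      have hnn : 0 ≤ ∫ y, ((v y : ℝ) - A) ^ 2 ∂γ :=
        integral_nonneg fun y => sq_nonneg _
      rw [hI] at hnn ⊢
      linarith
    have hae : (fun y => ((v y : ℝ) - A) ^ 2) =ᵐ[γ] 0 := by
      rw [← integral_eq_zero_iff_of_nonneg (fun y => sq_nonneg _) hgi]
      exact hI0
    refine hvc A.toNNReal ?_
    filter_upwards [hae] with y hy
    have h1 : (v y : ℝ) = A := sub_eq_zero.mp (by simpa using hy)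
    have : ((v y : ℝ)).toNNReal = A.toNNReal := by rw [h1]
    simpa [Real.toNNReal_coe] using this
  -- conclude
  have : m ^ 4 + 6 * m ^ 2 * (t : ℝ) + 3 * (t : ℝ) ^ 2 ≤ 3 * (m ^ 2 + (t : ℝ)) ^ 2 := by
    nlinarith [sq_nonneg (m : ℝ), sq_nonneg ((m : ℝ) ^ 2)]
  nlinarith [hCS, eq2, eq4]
end GSMaux

/-- A Gaussian scale mixture over a standard Gaussian mixing measure, with a mixing
variance that is not almost-everywhere constant, is not a Gaussian measure. -/
theorem gaussian_scale_mixture_not_gaussian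
    (v : ℝ → ℝ≥0) (hv : Measurable v)
    (hker : Measurable fun y => gaussianReal 0 (v y))
    (hint : Integrable (fun y => ((v y : ℝ)) ^ 2) (gaussianReal 0 1))
    (hvc : ∀ c : ℝ≥0, ¬ (v =ᵐ[gaussianReal 0 1] fun _ => c)) :
    ∀ (m : ℝ) (t : ℝ≥0),
      (gaussianReal 0 1).bind (fun y => gaussianReal 0 (v y)) ≠ gaussianReal m t := by
  exact GSMaux.main v hv hker hint hvc
end
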